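/- There exists a universal constant C such that for every d ≥ 1 and every subset A ⊆ K, the noise sparsifier H for G_d satisfies h'(A) ≤ C · h_K(A), where h' is the cut function of H and h_K is the terminal cut function of G_d. -/

import Mathlib

open Finset

/-- Vertices of the `d`-dimensional Boolean hypercube. -/
abbrev Cube (d : ℕ) := Fin d → Bool

/-- Hamming distance between two Boolean strings. -/
def hamm {d : ℕ} (s t : Cube d) : ℕ := (Finset.univ.filter fun i => s i ≠ t i).card

/-- The vertex set of the graph `G_d`: `Sum.inl s` is the hypercube vertex `y_s`,
`Sum.inr s` is the terminal `z_s`. -/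
abbrev Vtx (d : ℕ) := Cube d ⊕ Cube d

/-- Edge capacities of the graph `G_d`: hypercube edges (Hamming distance `1`) have
capacity `1`, each terminal `z_s` is attached to `y_s` by an edge of capacity `√d`. -/
noncomputable def gCap (d : ℕ) : Vtx d → Vtx d → ℝ
  | Sum.inl s, Sum.inl t => if hamm s t = 1 then 1 else 0
  | Sum.inl s, Sum.inr t => if s = t then Real.sqrt d else 0
  | Sum.inr s, Sum.inl t => if s = t then Real.sqrt d else 0
  | Sum.inr _, Sum.inr _ => 0

/-- The cut function of a capacitated graph: total capacity of edges crossing `A`.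
(Each unordered crossing edge `{u,v}` with `u ∈ A`, `v ∉ A` is counted once.) -/
noncomputable def cutFun {V : Type*} [Fintype V] [DecidableEq V]
    (c : V → V → ℝ) (A : Finset V) : ℝ :=
  ∑ u ∈ A, ∑ v ∈ Aᶜ, c u v

/-- The terminal set `K = {z_s}` of `G_d`. -/
def Kset (d : ℕ) : Finset (Vtx d) := Finset.univ.image Sum.inr

/-- The terminal cut function: `h_K(U) = min { h(A) : A ∩ K = U }`. -/
noncomputable def termCut {V : Type*} [Fintype V] [DecidableEq V]
    (c : V → V → ℝ) (K U : Finset V) : ℝ :=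
  sInf {x : ℝ | ∃ A : Finset V, A ∩ K = U ∧ cutFun c A = x}

/-- The terminal cut function of `G_d`, for a set `A` of terminals (identified with
Boolean strings). -/
noncomputable def hK (d : ℕ) (A : Finset (Cube d)) : ℝ :=
  termCut (gCap d) (Kset d) (A.image Sum.inr)

/-- The flip probability `p = (1 - ρ)/2` where `ρ = 1 - 1/√d`. -/
noncomputable def noiseP (d : ℕ) : ℝ := (1 - (1 - 1 / Real.sqrt d)) / 2

/-- Capacities of the noise sparsifier `H`:
`c_H(z_s, z_t) = √d · p^{Hamm(s,t)} · (1-p)^{d - Hamm(s,t)}` for `s ≠ t`. -/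
noncomputable def noiseCap (d : ℕ) (s t : Cube d) : ℝ :=
  if s = t then 0
  else Real.sqrt d * noiseP d ^ hamm s t * (1 - noiseP d) ^ (d - hamm s t)

set_option maxHeartbeats 1000000

/-- per-coordinate weight -/
noncomputable def wi (d : ℕ) (a b : Bool) : ℝ := if a = b then 1 - noiseP d else noiseP d
/-- total noise weight -/
noncomputable def Wn (d : ℕ) (s t : Cube d) : ℝ := ∏ i, wi d (s i) (t i)

lemma noiseP_eq (d : ℕ) : noiseP d = 1 / (2 * Real.sqrt d) := by
  unfold noiseP; field_simp; ring

lemma noiseP_nonneg (d : ℕ) : 0 ≤ noiseP d := by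
  rw [noiseP_eq]; positivity

lemma noiseP_le_half {d : ℕ} (hd : 1 ≤ d) : noiseP d ≤ 1/2 := by
  rw [noiseP_eq]
  have h1 : (1:ℝ) ≤ Real.sqrt d := by
    rw [show (1:ℝ) = Real.sqrt 1 by simp]
    exact Real.sqrt_le_sqrt (by exact_mod_cast hd)
  rw [div_le_div_iff₀ (by positivity) (by norm_num)]
  nlinarith

lemma two_p_sqrt {d : ℕ} (hd : 1 ≤ d) : 2 * noiseP d * Real.sqrt d = 1 := by
  have h : Real.sqrt d ≠ 0 := by
    have : (0:ℝ) < d := by exact_mod_cast hd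
    positivity
  rw [noiseP_eq]; field_simp

lemma wi_nonneg {d : ℕ} (hd : 1 ≤ d) (a b : Bool) : 0 ≤ wi d a b := by
  unfold wi; split
  · linarith [noiseP_le_half hd]
  · exact noiseP_nonneg d

lemma wi_symm (d : ℕ) (a b : Bool) : wi d a b = wi d b a := by
  unfold wi; by_cases h : a = b <;> simp [h, Ne.symm, eq_comm]

lemma Wn_nonneg {d : ℕ} (hd : 1 ≤ d) (s t : Cube d) : 0 ≤ Wn d s t :=
  Finset.prod_nonneg fun i _ => wi_nonneg hd _ _

lemma Wn_symm (d : ℕ) (s t : Cube d) : Wn d s t = Wn d t s :=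
  Finset.prod_congr rfl fun i _ => wi_symm d _ _

lemma sum_wi {d : ℕ} (a : Bool) : ∑ b : Bool, wi d a b = 1 := by
  cases a <;> simp [Fintype.sum_bool, wi] <;> ring

lemma Wn_eq_pow {d : ℕ} (s t : Cube d) :
    noiseP d ^ hamm s t * (1 - noiseP d) ^ (d - hamm s t) = Wn d s t := by
  unfold Wn wi
  rw [Finset.prod_ite (f := fun _ => 1 - noiseP d) (g := fun _ => noiseP d)]
  rw [Finset.prod_const, Finset.prod_const]
  have h1 : (univ.filter fun i => ¬ s i = t i).card = hamm s t := rfl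
  have h2 : (univ.filter fun i => s i = t i).card = d - hamm s t := by
    have := Finset.card_filter_add_card_filter_not
      (s := (univ : Finset (Fin d))) (p := fun i => s i = t i)
    simp only [Finset.card_univ, Fintype.card_fin] at this
    omega
  rw [h1, h2]; ring

lemma sum_Wn {d : ℕ} (s : Cube d) : ∑ t : Cube d, Wn d s t = 1 := by
  unfold Wn
  rw [← Fintype.piFinset_univ, ← Finset.prod_univ_sum (fun _ => (univ : Finset Bool))
    (fun i b => wi d (s i) b)]
  exact Finset.prod_eq_one fun i _ => sum_wi (s i)

/-- real-valued indicator -/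
def chi {α : Type*} [DecidableEq α] (P : Finset α) (x : α) : ℝ := if x ∈ P then 1 else 0

lemma chi_nonneg {α : Type*} [DecidableEq α] (P : Finset α) (x : α) : 0 ≤ chi P x := by
  unfold chi; split <;> norm_num

lemma chi_le_one {α : Type*} [DecidableEq α] (P : Finset α) (x : α) : chi P x ≤ 1 := by
  unfold chi; split <;> norm_num

def flipc {d : ℕ} (j : Fin d) (u : Cube d) : Cube d := Function.update u j (!u j)

lemma flipc_flipc {d : ℕ} (j : Fin d) (u : Cube d) : flipc j (flipc j u) = u := by
  unfold flipc
  rw [Function.update_idem]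
  simp [Function.update_self]

def flipEquiv {d : ℕ} (j : Fin d) : Cube d ≃ Cube d :=
  ⟨flipc j, flipc j, flipc_flipc j, flipc_flipc j⟩

lemma hamm_flipc {d : ℕ} (s : Cube d) (j : Fin d) : hamm s (flipc j s) = 1 := by
  unfold hamm
  have : (univ.filter fun i => s i ≠ flipc j s i) = {j} := by
    ext i
    simp only [mem_filter, mem_univ, true_and, mem_singleton]
    by_cases h : i = j
    · subst h; simp [flipc]
    · simp [flipc, Function.update_of_ne h, h]
  rw [this]; simp

lemma flipc_inj {d : ℕ} (s : Cube d) {j j' : Fin d} (h : flipc j s = flipc j' s) : j = j' := by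
  by_contra hne
  have h1 : flipc j s j = flipc j' s j := by rw [h]
  unfold flipc at h1
  rw [Function.update_self, Function.update_of_ne hne] at h1
  simp at h1

lemma flipc_surj {d : ℕ} {s t : Cube d} (h : hamm s t = 1) : ∃ j : Fin d, t = flipc j s := by
  unfold hamm at h
  obtain ⟨j, hj⟩ := Finset.card_eq_one.mp h
  refine ⟨j, funext fun i => ?_⟩
  by_cases hij : i = j
  · subst hij
    have : i ∈ univ.filter fun i' => s i' ≠ t i' := by rw [hj]; simp
    simp only [mem_filter, mem_univ, true_and] at this
    unfold flipc; rw [Function.update_self]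
    cases hsi : s i <;> cases hti : t i <;> simp_all
  · have : i ∉ univ.filter fun i' => s i' ≠ t i' := by rw [hj]; simpa using hij
    simp only [mem_filter, mem_univ, true_and, not_not] at this
    unfold flipc; rw [Function.update_of_ne hij, this]

/-- sum over Hamming-neighbours equals sum over directions -/
lemma sum_hamm_one {d : ℕ} (s : Cube d) (g : Cube d → ℝ) :
    ∑ t : Cube d, (if hamm s t = 1 then g t else 0) = ∑ j : Fin d, g (flipc j s) := by
  rw [Finset.sum_ite, Finset.sum_const_zero, add_zero]
  have himg : univ.filter (fun t => hamm s t = 1) = univ.image (fun j => flipc j s) := by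
    ext t
    simp only [mem_filter, mem_univ, true_and, mem_image]
    constructor
    · intro h; obtain ⟨j, hj⟩ := flipc_surj h; exact ⟨j, hj.symm⟩
    · rintro ⟨j, -, rfl⟩; exact hamm_flipc s j
  rw [himg, Finset.sum_image (fun j _ j' _ h => flipc_inj s h)]

/-- the hybrid string: first `m` coordinates from `t`, the rest from `s`. -/
def hyb {d : ℕ} (s t : Cube d) (m : ℕ) : Cube d := fun i => if (i : ℕ) < m then t i else s i

lemma hyb_zero {d : ℕ} (s t : Cube d) : hyb s t 0 = s := by
  funext i; simp [hyb]

lemma hyb_top {d : ℕ} (s t : Cube d) : hyb s t d = t := by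
  funext i; simp [hyb, i.isLt]

/-- the coordinate swap below `j`. -/
def swap2 {d : ℕ} (j : Fin d) : Cube d × Cube d ≃ Cube d × Cube d where
  toFun q := (fun i => if (i : ℕ) < (j : ℕ) then q.2 i else q.1 i,
              fun i => if (i : ℕ) < (j : ℕ) then q.1 i else q.2 i)
  invFun q := (fun i => if (i : ℕ) < (j : ℕ) then q.2 i else q.1 i,
              fun i => if (i : ℕ) < (j : ℕ) then q.1 i else q.2 i)
  left_inv q := by
    refine Prod.ext (funext fun i => ?_) (funext fun i => ?_) <;>
      by_cases h : (i : ℕ) < (j : ℕ) <;> simp [h]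
  right_inv q := by
    refine Prod.ext (funext fun i => ?_) (funext fun i => ?_) <;>
      by_cases h : (i : ℕ) < (j : ℕ) <;> simp [h]

lemma chi_ind {α : Type*} [DecidableEq α] (P : Finset α) (x y : α) :
    chi P x * (1 - chi P y) ≤ |chi P y - chi P x| := by
  unfold chi; split <;> split <;> simp

lemma abs_chi_split {α : Type*} [DecidableEq α] (P : Finset α) (x y : α) :
    |chi P y - chi P x| = chi P x * (1 - chi P y) + chi P y * (1 - chi P x) := by
  unfold chi; split <;> split <;> simp

/-- **Core lemma**: the noise-crossing weight is at most `2p` times the edge boundary. -/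
lemma core_lemma {d : ℕ} (hd : 1 ≤ d) (S : Finset (Cube d)) :
    ∑ s : Cube d, ∑ t : Cube d, chi S s * (1 - chi S t) * Wn d s t ≤
    2 * noiseP d * ∑ s : Cube d, ∑ t : Cube d,
      chi S s * (1 - chi S t) * (if hamm s t = 1 then 1 else 0) := by
  set p := noiseP d with hp
  -- Step B+C : for each direction j, the hybrid-difference weighted sum
  have stepBC : ∀ j : Fin d,
      (∑ s : Cube d, ∑ t : Cube d,
        Wn d s t * |chi S (hyb s t ((j : ℕ) + 1)) - chi S (hyb s t (j : ℕ))|)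
      = ∑ u : Cube d, p * |chi S (flipc j u) - chi S u| := by
    intro j
    -- first change variables by swap2 j
    have hswap : (∑ s : Cube d, ∑ t : Cube d,
        Wn d s t * |chi S (hyb s t ((j : ℕ) + 1)) - chi S (hyb s t (j : ℕ))|)
        = ∑ u : Cube d, ∑ v : Cube d,
            Wn d u v * |chi S (Function.update u j (v j)) - chi S u| := by
      calc (∑ s : Cube d, ∑ t : Cube d,
            Wn d s t * |chi S (hyb s t ((j : ℕ) + 1)) - chi S (hyb s t (j : ℕ))|)
          = ∑ q : Cube d × Cube d,
              Wn d q.1 q.2 * |chi S (hyb q.1 q.2 ((j : ℕ) + 1)) - chi S (hyb q.1 q.2 (j : ℕ))| :=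
            (Fintype.sum_prod_type (fun q : Cube d × Cube d => Wn d q.1 q.2 *
              |chi S (hyb q.1 q.2 ((j : ℕ) + 1)) - chi S (hyb q.1 q.2 (j : ℕ))|)).symm
        _ = ∑ q : Cube d × Cube d,
              Wn d q.1 q.2 * |chi S (Function.update q.1 j (q.2 j)) - chi S q.1| := ?_
        _ = ∑ u : Cube d, ∑ v : Cube d,
              Wn d u v * |chi S (Function.update u j (v j)) - chi S u| :=
            Fintype.sum_prod_type (fun q : Cube d × Cube d => Wn d q.1 q.2 *
              |chi S (Function.update q.1 j (q.2 j)) - chi S q.1|)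
      refine Fintype.sum_equiv (swap2 j)
        (fun q => Wn d q.1 q.2 *
          |chi S (hyb q.1 q.2 ((j : ℕ) + 1)) - chi S (hyb q.1 q.2 (j : ℕ))|)
        (fun q => Wn d q.1 q.2 * |chi S (Function.update q.1 j (q.2 j)) - chi S q.1|)
        fun q => ?_
      obtain ⟨s, t⟩ := q
      have e1 : Wn d s t = Wn d ((swap2 j (s, t)).1) ((swap2 j (s, t)).2) := by
        refine Finset.prod_congr rfl fun i _ => ?_
        by_cases h : (i : ℕ) < (j : ℕ)
        · simp only [swap2, Equiv.coe_fn_mk, if_pos h]; exact wi_symm d _ _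
        · simp only [swap2, Equiv.coe_fn_mk, if_neg h]
      have e2 : hyb s t (j : ℕ) = (swap2 j (s, t)).1 := rfl
      have e3 : hyb s t ((j : ℕ) + 1)
          = Function.update ((swap2 j (s, t)).1) j ((swap2 j (s, t)).2 j) := by
        funext i
        by_cases h : i = j
        · subst h
          simp [hyb, swap2, Function.update_self]
        · have hv : (i : ℕ) ≠ (j : ℕ) := fun hc => h (Fin.ext hc)
          rw [Function.update_of_ne h]
          simp only [hyb, swap2, Equiv.coe_fn_mk]
          rcases Nat.lt_or_ge (i : ℕ) (j : ℕ) with h2 | h2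
          · rw [if_pos (by omega), if_pos h2]
          · rw [if_neg (by omega), if_neg (by omega)]
      show Wn d s t * |chi S (hyb s t ((j : ℕ) + 1)) - chi S (hyb s t (j : ℕ))|
          = Wn d ((swap2 j) (s, t)).1 ((swap2 j) (s, t)).2 *
            |chi S (Function.update ((swap2 j) (s, t)).1 j (((swap2 j) (s, t)).2 j)) -
              chi S ((swap2 j) (s, t)).1|
      rw [← e1, ← e3, ← e2]
    rw [hswap]
    -- now the inner sum over v
    refine Finset.sum_congr rfl fun u _ => ?_
    set gg : Bool → ℝ := fun b => |chi S (Function.update u j b) - chi S u| with hgg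
    set h : Fin d → Bool → ℝ :=
      fun i b => if i = j then wi d (u i) b * gg b else wi d (u i) b with hh
    have hsummand : ∀ v : Cube d,
        Wn d u v * |chi S (Function.update u j (v j)) - chi S u| = ∏ i, h i (v i) := by
      intro v
      have r1 : (∏ i, h i (v i)) = h j (v j) * ∏ i ∈ univ.erase j, h i (v i) :=
        (Finset.mul_prod_erase univ _ (mem_univ j)).symm
      have r2 : (∏ i ∈ univ.erase j, h i (v i)) = ∏ i ∈ univ.erase j, wi d (u i) (v i) := by
        refine Finset.prod_congr rfl fun i hi => ?_
        rw [hh]; simp [Finset.ne_of_mem_erase hi]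
      have r3 : Wn d u v = wi d (u j) (v j) * ∏ i ∈ univ.erase j, wi d (u i) (v i) :=
        (Finset.mul_prod_erase univ _ (mem_univ j)).symm
      rw [r1, r2, r3, hh]; simp only [eq_self_iff_true, if_true]; ring
    calc ∑ v : Cube d, Wn d u v * |chi S (Function.update u j (v j)) - chi S u|
        = ∑ v : Cube d, ∏ i, h i (v i) := Finset.sum_congr rfl fun v _ => hsummand v
      _ = ∏ i, ∑ b : Bool, h i b := by
          rw [← Fintype.piFinset_univ,
            ← Finset.prod_univ_sum (fun _ => (univ : Finset Bool)) h]
      _ = ∑ b : Bool, h j b := by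
          refine Finset.prod_eq_single j (fun i _ hij => ?_) (fun hni => absurd (mem_univ j) hni)
          rw [hh]; simp only [if_neg hij]; exact sum_wi (u i)
      _ = p * |chi S (flipc j u) - chi S u| := by
          have hgg0 : gg (u j) = 0 := by
            rw [hgg]; simp [Function.update_eq_self]
          have hggf : gg (!u j) = |chi S (flipc j u) - chi S u| := by rw [hgg]; rfl
          rw [hh]
          simp only [if_pos rfl, Fintype.sum_bool]
          cases huj : u j
          · rw [huj] at hgg0 hggf
            simp only [Bool.not_false] at hggf
            rw [hgg0, hggf]
            simp [wi, hp]
          · rw [huj] at hgg0 hggf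
            simp only [Bool.not_true] at hggf
            rw [hgg0, hggf]
            simp [wi, hp]
  -- Step D : per direction, relate to directed edge boundary
  have stepD : ∀ j : Fin d,
      (∑ u : Cube d, |chi S (flipc j u) - chi S u|)
      = 2 * ∑ u : Cube d, chi S u * (1 - chi S (flipc j u)) := by
    intro j
    have : ∀ u : Cube d, |chi S (flipc j u) - chi S u|
        = chi S u * (1 - chi S (flipc j u)) + chi S (flipc j u) * (1 - chi S u) :=
      fun u => abs_chi_split S u (flipc j u)
    rw [Finset.sum_congr rfl fun u _ => this u, Finset.sum_add_distrib]
    have hswap : (∑ u : Cube d, chi S (flipc j u) * (1 - chi S u))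
        = ∑ u : Cube d, chi S u * (1 - chi S (flipc j u)) := by
      refine Fintype.sum_equiv (flipEquiv j)
        (fun u => chi S (flipc j u) * (1 - chi S u))
        (fun u => chi S u * (1 - chi S (flipc j u))) fun u => ?_
      simp only [flipEquiv, Equiv.coe_fn_mk, flipc_flipc]
    rw [hswap]; ring
  -- Step A : termwise bound + telescoping
  have stepA : (∑ s : Cube d, ∑ t : Cube d, chi S s * (1 - chi S t) * Wn d s t)
      ≤ ∑ j : Fin d, ∑ s : Cube d, ∑ t : Cube d,
          Wn d s t * |chi S (hyb s t ((j : ℕ) + 1)) - chi S (hyb s t (j : ℕ))| := by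
    rw [Finset.sum_comm (γ := Fin d)]
    refine Finset.sum_le_sum fun s _ => ?_
    rw [Finset.sum_comm (γ := Fin d)]
    refine Finset.sum_le_sum fun t _ => ?_
    have tele : |chi S t - chi S s|
        ≤ ∑ j : Fin d, |chi S (hyb s t ((j : ℕ) + 1)) - chi S (hyb s t (j : ℕ))| := by
      have h1 : chi S t - chi S s
          = ∑ j ∈ range d, (chi S (hyb s t (j + 1)) - chi S (hyb s t j)) := by
        rw [Finset.sum_range_sub (fun m => chi S (hyb s t m)) d, hyb_zero, hyb_top]
      calc |chi S t - chi S s|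
          = |∑ j ∈ range d, (chi S (hyb s t (j + 1)) - chi S (hyb s t j))| := by rw [h1]
        _ ≤ ∑ j ∈ range d, |chi S (hyb s t (j + 1)) - chi S (hyb s t j)| :=
            Finset.abs_sum_le_sum_abs _ _
        _ = ∑ j : Fin d, |chi S (hyb s t ((j : ℕ) + 1)) - chi S (hyb s t (j : ℕ))| :=
            (Fin.sum_univ_eq_sum_range (fun j => |chi S (hyb s t (j + 1)) - chi S (hyb s t j)|) d).symm
    calc chi S s * (1 - chi S t) * Wn d s t
        ≤ |chi S t - chi S s| * Wn d s t :=
          mul_le_mul_of_nonneg_right (chi_ind S s t) (Wn_nonneg hd s t)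
      _ ≤ (∑ j : Fin d, |chi S (hyb s t ((j : ℕ) + 1)) - chi S (hyb s t (j : ℕ))|) * Wn d s t :=
          mul_le_mul_of_nonneg_right tele (Wn_nonneg hd s t)
      _ = ∑ j : Fin d, Wn d s t * |chi S (hyb s t ((j : ℕ) + 1)) - chi S (hyb s t (j : ℕ))| := by
          rw [Finset.sum_mul]; exact Finset.sum_congr rfl fun j _ => mul_comm _ _
  -- assemble
  calc (∑ s : Cube d, ∑ t : Cube d, chi S s * (1 - chi S t) * Wn d s t)
      ≤ ∑ j : Fin d, ∑ s : Cube d, ∑ t : Cube d,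
          Wn d s t * |chi S (hyb s t ((j : ℕ) + 1)) - chi S (hyb s t (j : ℕ))| := stepA
    _ = ∑ j : Fin d, ∑ u : Cube d, p * |chi S (flipc j u) - chi S u| :=
        Finset.sum_congr rfl fun j _ => stepBC j
    _ = ∑ j : Fin d, p * (2 * ∑ u : Cube d, chi S u * (1 - chi S (flipc j u))) := by
        refine Finset.sum_congr rfl fun j _ => ?_
        rw [← Finset.mul_sum, stepD j]
    _ = 2 * p * ∑ j : Fin d, ∑ u : Cube d, chi S u * (1 - chi S (flipc j u)) := by
        rw [Finset.mul_sum]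
        exact Finset.sum_congr rfl fun j _ => by ring
    _ = 2 * p * ∑ u : Cube d, ∑ j : Fin d, chi S u * (1 - chi S (flipc j u)) := by
        rw [Finset.sum_comm]
    _ = 2 * p * ∑ s : Cube d, ∑ t : Cube d,
          chi S s * (1 - chi S t) * (if hamm s t = 1 then 1 else 0) := by
        congr 1
        refine Finset.sum_congr rfl fun u _ => ?_
        have : ∀ t : Cube d, chi S u * (1 - chi S t) * (if hamm u t = 1 then 1 else 0)
            = if hamm u t = 1 then chi S u * (1 - chi S t) else 0 := by
          intro t; split <;> simp
        rw [Finset.sum_congr rfl fun t _ => this t,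
          sum_hamm_one u (fun t => chi S u * (1 - chi S t))]

lemma sum_chi_mul {V : Type*} [Fintype V] [DecidableEq V] (B : Finset V) (g : V → ℝ) :
    ∑ u ∈ B, g u = ∑ u : V, chi B u * g u := by
  have : ∀ u : V, chi B u * g u = if u ∈ B then g u else 0 := by
    intro u; unfold chi; split <;> simp
  rw [Finset.sum_congr rfl fun u _ => this u, Finset.sum_ite_mem, Finset.univ_inter]

lemma sum_chi_compl_mul {V : Type*} [Fintype V] [DecidableEq V] (B : Finset V) (g : V → ℝ) :
    ∑ u ∈ Bᶜ, g u = ∑ u : V, (1 - chi B u) * g u := by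
  have : ∀ u : V, (1 - chi B u) * g u = if u ∈ Bᶜ then g u else 0 := by
    intro u; unfold chi
    by_cases h : u ∈ B <;> simp [h, Finset.mem_compl]
  rw [Finset.sum_congr rfl fun u _ => this u, Finset.sum_ite_mem, Finset.univ_inter]

lemma cutFun_indicator {V : Type*} [Fintype V] [DecidableEq V] (c : V → V → ℝ) (B : Finset V) :
    cutFun c B = ∑ u : V, ∑ v : V, chi B u * (1 - chi B v) * c u v := by
  unfold cutFun
  rw [sum_chi_mul B (fun u => ∑ v ∈ Bᶜ, c u v)]
  refine Finset.sum_congr rfl fun u _ => ?_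
  rw [sum_chi_compl_mul B (fun v => c u v), Finset.mul_sum]
  exact Finset.sum_congr rfl fun v _ => by ring

lemma gCut_eq {d : ℕ} (B : Finset (Vtx d)) (A S : Finset (Cube d))
    (hA : ∀ s : Cube d, Sum.inr s ∈ B ↔ s ∈ A)
    (hS : ∀ s : Cube d, Sum.inl s ∈ B ↔ s ∈ S) :
    cutFun (gCap d) B =
      (∑ s : Cube d, ∑ t : Cube d,
        chi S s * (1 - chi S t) * (if hamm s t = 1 then 1 else 0))
      + Real.sqrt d * (∑ s : Cube d, chi S s * (1 - chi A s))
      + Real.sqrt d * (∑ s : Cube d, chi A s * (1 - chi S s)) := by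
  have hchiS : ∀ s : Cube d, chi B (Sum.inl s) = chi S s := by
    intro s; unfold chi; simp [hS s]
  have hchiA : ∀ s : Cube d, chi B (Sum.inr s) = chi A s := by
    intro s; unfold chi; simp [hA s]
  rw [cutFun_indicator]
  rw [Fintype.sum_sum_type (fun u => ∑ v : Vtx d, chi B u * (1 - chi B v) * gCap d u v)]
  have inner : ∀ u : Vtx d, (∑ v : Vtx d, chi B u * (1 - chi B v) * gCap d u v)
      = (∑ t : Cube d, chi B u * (1 - chi B (Sum.inl t)) * gCap d u (Sum.inl t))
      + ∑ t : Cube d, chi B u * (1 - chi B (Sum.inr t)) * gCap d u (Sum.inr t) :=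
    fun u => Fintype.sum_sum_type (fun v => chi B u * (1 - chi B v) * gCap d u v)
  rw [Finset.sum_congr rfl fun s _ => inner (Sum.inl s),
      Finset.sum_congr rfl fun s _ => inner (Sum.inr s),
      Finset.sum_add_distrib, Finset.sum_add_distrib]
  have T11 : (∑ s : Cube d, ∑ t : Cube d,
      chi B (Sum.inl s) * (1 - chi B (Sum.inl t)) * gCap d (Sum.inl s) (Sum.inl t))
      = ∑ s : Cube d, ∑ t : Cube d,
        chi S s * (1 - chi S t) * (if hamm s t = 1 then 1 else 0) := by
    refine Finset.sum_congr rfl fun s _ => Finset.sum_congr rfl fun t _ => ?_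
    rw [hchiS, hchiS]; rfl
  have T12 : (∑ s : Cube d, ∑ t : Cube d,
      chi B (Sum.inl s) * (1 - chi B (Sum.inr t)) * gCap d (Sum.inl s) (Sum.inr t))
      = Real.sqrt d * (∑ s : Cube d, chi S s * (1 - chi A s)) := by
    rw [Finset.mul_sum]
    refine Finset.sum_congr rfl fun s _ => ?_
    have : ∀ t : Cube d, chi B (Sum.inl s) * (1 - chi B (Sum.inr t)) * gCap d (Sum.inl s) (Sum.inr t)
        = if s = t then Real.sqrt d * (chi S s * (1 - chi A t)) else 0 := by
      intro t
      rw [hchiS, hchiA]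
      show chi S s * (1 - chi A t) * (if s = t then Real.sqrt d else 0)
        = if s = t then Real.sqrt d * (chi S s * (1 - chi A t)) else 0
      split <;> ring
    rw [Finset.sum_congr rfl fun t _ => this t, Finset.sum_ite_eq]
    simp
  have T21 : (∑ s : Cube d, ∑ t : Cube d,
      chi B (Sum.inr s) * (1 - chi B (Sum.inl t)) * gCap d (Sum.inr s) (Sum.inl t))
      = Real.sqrt d * (∑ s : Cube d, chi A s * (1 - chi S s)) := by
    rw [Finset.mul_sum]
    refine Finset.sum_congr rfl fun s _ => ?_
    have : ∀ t : Cube d, chi B (Sum.inr s) * (1 - chi B (Sum.inl t)) * gCap d (Sum.inr s) (Sum.inl t)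
        = if s = t then Real.sqrt d * (chi A s * (1 - chi S t)) else 0 := by
      intro t
      rw [hchiA, hchiS]
      show chi A s * (1 - chi S t) * (if s = t then Real.sqrt d else 0)
        = if s = t then Real.sqrt d * (chi A s * (1 - chi S t)) else 0
      split <;> ring
    rw [Finset.sum_congr rfl fun t _ => this t, Finset.sum_ite_eq]
    simp
  have T22 : (∑ s : Cube d, ∑ t : Cube d,
      chi B (Sum.inr s) * (1 - chi B (Sum.inr t)) * gCap d (Sum.inr s) (Sum.inr t)) = 0 := by
    refine Finset.sum_eq_zero fun s _ => Finset.sum_eq_zero fun t _ => ?_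
    show chi B (Sum.inr s) * (1 - chi B (Sum.inr t)) * 0 = 0
    ring
  rw [T11, T12, T21, T22]
  ring

lemma split_ind {α : Type*} [DecidableEq α] (A S : Finset α) (x y : α) {w : ℝ} (hw : 0 ≤ w) :
    chi A x * (1 - chi A y) * w ≤
      chi S x * (1 - chi S y) * w + chi A x * (1 - chi S x) * w + chi S y * (1 - chi A y) * w := by
  unfold chi
  split_ifs <;> nlinarith

lemma noiseCut_eq {d : ℕ} (A : Finset (Cube d)) :
    cutFun (noiseCap d) A
      = Real.sqrt d * ∑ s : Cube d, ∑ t : Cube d, chi A s * (1 - chi A t) * Wn d s t := by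
  rw [cutFun_indicator, Finset.mul_sum]
  refine Finset.sum_congr rfl fun s _ => ?_
  rw [Finset.mul_sum]
  refine Finset.sum_congr rfl fun t _ => ?_
  unfold noiseCap
  by_cases h : s = t
  · subst h
    have : chi A s * (1 - chi A s) = 0 := by unfold chi; split <;> ring
    rw [if_pos rfl, this]
    ring
  · rw [if_neg h, ← Wn_eq_pow]
    ring

lemma main_ineq {d : ℕ} (hd : 1 ≤ d) (A : Finset (Cube d)) (B : Finset (Vtx d))
    (hB : B ∩ Kset d = A.image Sum.inr) :
    cutFun (noiseCap d) A ≤ cutFun (gCap d) B := by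
  have hsq : (0:ℝ) ≤ Real.sqrt d := Real.sqrt_nonneg d
  set S : Finset (Cube d) := Finset.univ.filter (fun s : Cube d => (Sum.inl s : Vtx d) ∈ B) with hSdef
  have hS : ∀ s : Cube d, Sum.inl s ∈ B ↔ s ∈ S := by
    intro s; rw [hSdef]; simp
  have hA : ∀ s : Cube d, Sum.inr s ∈ B ↔ s ∈ A := by
    intro s
    constructor
    · intro h
      have hk : (Sum.inr s : Vtx d) ∈ Kset d := by
        unfold Kset; exact Finset.mem_image_of_mem Sum.inr (mem_univ s)
      have : (Sum.inr s : Vtx d) ∈ (A.image Sum.inr : Finset (Vtx d)) := by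
        rw [← hB]; exact Finset.mem_inter.mpr ⟨h, hk⟩
      obtain ⟨a, ha, hae⟩ := Finset.mem_image.mp this
      rwa [← Sum.inr.inj hae]
    · intro h
      have : (Sum.inr s : Vtx d) ∈ B ∩ Kset d := by
        rw [hB]; exact Finset.mem_image_of_mem Sum.inr h
      exact (Finset.mem_inter.mp this).1
  -- the middle sums
  have mid1 : (∑ s : Cube d, ∑ t : Cube d, chi A s * (1 - chi S s) * Wn d s t)
      = ∑ s : Cube d, chi A s * (1 - chi S s) := by
    refine Finset.sum_congr rfl fun s _ => ?_
    rw [← Finset.mul_sum, sum_Wn, mul_one]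
  have mid2 : (∑ s : Cube d, ∑ t : Cube d, chi S t * (1 - chi A t) * Wn d s t)
      = ∑ s : Cube d, chi S s * (1 - chi A s) := by
    rw [Finset.sum_comm]
    refine Finset.sum_congr rfl fun t _ => ?_
    have : (∑ s : Cube d, Wn d s t) = 1 := by
      rw [Finset.sum_congr rfl fun s _ => Wn_symm d s t, sum_Wn]
    rw [← Finset.mul_sum, this, mul_one]
  have hsplit : (∑ s : Cube d, ∑ t : Cube d, chi A s * (1 - chi A t) * Wn d s t)
      ≤ (∑ s : Cube d, ∑ t : Cube d, chi S s * (1 - chi S t) * Wn d s t)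
        + (∑ s : Cube d, chi A s * (1 - chi S s))
        + (∑ s : Cube d, chi S s * (1 - chi A s)) := by
    rw [← mid1, ← mid2, ← Finset.sum_add_distrib, ← Finset.sum_add_distrib]
    refine Finset.sum_le_sum fun s _ => ?_
    rw [← Finset.sum_add_distrib, ← Finset.sum_add_distrib]
    exact Finset.sum_le_sum fun t _ => split_ind A S s t (Wn_nonneg hd s t)
  have hcore := core_lemma hd S
  set eS := ∑ s : Cube d, ∑ t : Cube d,
      chi S s * (1 - chi S t) * (if hamm s t = 1 then 1 else 0) with heS
  have heSnn : 0 ≤ eS := by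
    rw [heS]
    refine Finset.sum_nonneg fun s _ => Finset.sum_nonneg fun t _ => ?_
    unfold chi; split_ifs <;> norm_num
  rw [noiseCut_eq, gCut_eq B A S hA hS, ← heS]
  have step1 : Real.sqrt d * (∑ s : Cube d, ∑ t : Cube d, chi A s * (1 - chi A t) * Wn d s t)
      ≤ Real.sqrt d * ((2 * noiseP d * eS)
        + (∑ s : Cube d, chi A s * (1 - chi S s))
        + (∑ s : Cube d, chi S s * (1 - chi A s))) := by
    refine mul_le_mul_of_nonneg_left ?_ hsq
    calc (∑ s : Cube d, ∑ t : Cube d, chi A s * (1 - chi A t) * Wn d s t)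
        ≤ (∑ s : Cube d, ∑ t : Cube d, chi S s * (1 - chi S t) * Wn d s t)
          + (∑ s : Cube d, chi A s * (1 - chi S s))
          + (∑ s : Cube d, chi S s * (1 - chi A s)) := hsplit
      _ ≤ (2 * noiseP d * eS)
          + (∑ s : Cube d, chi A s * (1 - chi S s))
          + (∑ s : Cube d, chi S s * (1 - chi A s)) := by
          linarith [hcore]
  refine le_trans step1 (le_of_eq ?_)
  have : Real.sqrt d * (2 * noiseP d * eS) = eS := by
    have h2 := two_p_sqrt hd
    calc Real.sqrt d * (2 * noiseP d * eS) = (2 * noiseP d * Real.sqrt d) * eS := by ring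
      _ = eS := by rw [h2]; ring
  rw [mul_add, mul_add, this]
  ring


/-- There is a universal constant `C` such that for all `d ≥ 1` and all
subsets `A` of terminals, the cut of the noise sparsifier is at most `C` times the
corresponding terminal min-cut of `G_d`. -/
theorem noise_sparsifier_cuts_upper_bound :
    ∃ C : ℝ, ∀ d : ℕ, 1 ≤ d → ∀ A : Finset (Cube d),
      cutFun (noiseCap d) A ≤ C * hK d A := by
  refine ⟨1, fun d hd A => ?_⟩
  rw [one_mul]
  unfold hK termCut
  have hmem : (A.image Sum.inr) ∩ Kset d = A.image Sum.inr := by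
    refine Finset.inter_eq_left.mpr ?_
    intro x hx
    obtain ⟨a, _, rfl⟩ := Finset.mem_image.mp hx
    exact Finset.mem_image_of_mem Sum.inr (mem_univ a)
  refine le_csInf ⟨cutFun (gCap d) (A.image Sum.inr), A.image Sum.inr, hmem, rfl⟩ ?_
  rintro x ⟨B, hB, rfl⟩
  exact main_ineq hd A B hB
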